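/- Freedman-type inequality: Let (Ω, 𝔉, P) be a probability space with a filtration 𝔉_1 ⊆ 𝔉_2 ⊆ ⋯, and let X_1, …, X_T be real random variables such that each X_t is 𝔉_{t+1}-measurable, E[X_t | 𝔉_t] = 0, and X_t ≤ B almost surely for some constant B > 0. Then for every α ≥ B and every δ ∈ (0,1), with probability at least 1 − δ, Σ_{t=1}^T X_t ≤ (1/α) · Σ_{t=1}^T E[X_t² | 𝔉_t] + α · log(1/δ). -/

import Mathlib

open MeasureTheory Finset

lemma exp_le_one_add_add_sq {x : ℝ} (hx : x ≤ 1) : Real.exp x ≤ 1 + x + x ^ 2 := by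
  rcases le_or_gt (-1) x with h | h
  · have habs : |x| ≤ 1 := abs_le.mpr ⟨h, hx⟩
    have h3 := Real.exp_bound habs (by norm_num : 0 < 3)
    simp only [Finset.sum_range_succ, Finset.sum_range_zero] at h3
    norm_num at h3
    have hb : |x| ^ 3 ≤ x ^ 2 := by
      have h0 : |x| ^ 3 = |x| * x ^ 2 := by rw [pow_succ', sq_abs]
      nlinarith [abs_nonneg x, sq_nonneg x]
    have hfac : ((Nat.factorial 3 : ℝ)) = 6 := by norm_num [Nat.factorial]
    have := (abs_le.mp h3).2
    nlinarith [this]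
  · have h1 : Real.exp x ≤ Real.exp (-1) := Real.exp_le_exp.mpr h.le
    have h2 : Real.exp (-1) ≤ 3/4 := by
      rw [Real.exp_neg]
      rw [inv_le_comm₀ (Real.exp_pos 1) (by norm_num)]
      linarith [Real.add_one_le_exp (1:ℝ)]
    nlinarith [sq_nonneg (x + 1/2)]

section Aux

variable {Ω : Type*} {m0 : MeasurableSpace Ω} (P : Measure Ω) [IsProbabilityMeasure P]
    (ℱ : Filtration ℕ m0) (T : ℕ) (X : ℕ → Ω → ℝ) (B : ℝ) (α : ℝ)

/-- Measurability of the exponential process. -/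
lemma freedman_sm (hmeas : ∀ t ∈ Icc 1 T, StronglyMeasurable[ℱ (t + 1)] (X t))
    (n : ℕ) (hn : n ≤ T) :
    StronglyMeasurable[m0] (fun ω => Real.exp ((1/α) * ∑ t ∈ Icc 1 n, X t ω
      - (1/α)^2 * ∑ t ∈ Icc 1 n, (P[fun ω' => (X t ω') ^ 2 | ℱ t]) ω)) := by
  apply Real.continuous_exp.comp_stronglyMeasurable
  apply StronglyMeasurable.sub
  · apply StronglyMeasurable.const_mul
    apply Finset.stronglyMeasurable_fun_sum
    intro t ht
    exact ((hmeas t (mem_Icc.mpr ⟨(mem_Icc.mp ht).1, (mem_Icc.mp ht).2.trans hn⟩)).mono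
      (ℱ.le _))
  · apply StronglyMeasurable.const_mul
    apply Finset.stronglyMeasurable_fun_sum
    intro t _
    exact stronglyMeasurable_condExp.mono (ℱ.le t)

/-- Integrability of the exponential process. -/
lemma freedman_integrable (hB : 0 < B)
    (hmeas : ∀ t ∈ Icc 1 T, StronglyMeasurable[ℱ (t + 1)] (X t))
    (hbdd : ∀ t ∈ Icc 1 T, ∀ᵐ ω ∂P, X t ω ≤ B) (hα : B ≤ α)
    (n : ℕ) (hn : n ≤ T) :
    Integrable (fun ω => Real.exp ((1/α) * ∑ t ∈ Icc 1 n, X t ω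
      - (1/α)^2 * ∑ t ∈ Icc 1 n, (P[fun ω' => (X t ω') ^ 2 | ℱ t]) ω)) P := by
  have hα0 : 0 < α := hB.trans_le hα
  have hc : 0 < 1/α := by positivity
  have hcB : (1/α) * B ≤ 1 := by rw [div_mul_eq_mul_div, one_mul, div_le_one hα0]; exact hα
  have hbd : ∀ᵐ ω ∂P, ∀ t ∈ Icc 1 n, X t ω ≤ B := by
    rw [Filter.eventually_all_finset]
    intro t ht
    exact hbdd t (mem_Icc.mpr ⟨(mem_Icc.mp ht).1, (mem_Icc.mp ht).2.trans hn⟩)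
  have hVpos : ∀ᵐ ω ∂P, ∀ t ∈ Icc 1 n, 0 ≤ (P[fun ω' => (X t ω') ^ 2 | ℱ t]) ω := by
    rw [Filter.eventually_all_finset]
    intro t _
    exact condExp_nonneg (ae_of_all _ fun ω => sq_nonneg _)
  refine Integrable.mono' (integrable_const (Real.exp n))
    (freedman_sm P ℱ T X α hmeas n hn).aestronglyMeasurable ?_
  filter_upwards [hbd, hVpos] with ω h1 h2
  rw [Real.norm_eq_abs, abs_of_pos (Real.exp_pos _), Real.exp_le_exp]
  have hS : ∑ t ∈ Icc 1 n, X t ω ≤ n * B := by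
    calc ∑ t ∈ Icc 1 n, X t ω ≤ ∑ t ∈ Icc 1 n, B := Finset.sum_le_sum h1
    _ = (Icc 1 n).card * B := by rw [Finset.sum_const, nsmul_eq_mul]
    _ ≤ n * B := by
        apply mul_le_mul_of_nonneg_right _ hB.le
        simp [Nat.card_Icc]
  have hV : (0:ℝ) ≤ ∑ t ∈ Icc 1 n, (P[fun ω' => (X t ω') ^ 2 | ℱ t]) ω :=
    Finset.sum_nonneg h2
  have : (1/α) * ∑ t ∈ Icc 1 n, X t ω ≤ (1/α) * (n * B) :=
    mul_le_mul_of_nonneg_left hS hc.le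
  have h3 : (1/α) * (n * B) ≤ n := by
    calc (1/α) * (n * B) = n * ((1/α) * B) := by ring
    _ ≤ n * 1 := mul_le_mul_of_nonneg_left hcB (Nat.cast_nonneg n)
    _ = n := mul_one _
  nlinarith [mul_nonneg (sq_nonneg (1/α)) hV]

/-- The key supermartingale bound. -/
lemma freedman_key (hB : 0 < B)
    (hmeas : ∀ t ∈ Icc 1 T, StronglyMeasurable[ℱ (t + 1)] (X t))
    (hint : ∀ t ∈ Icc 1 T, Integrable (X t) P)
    (hint2 : ∀ t ∈ Icc 1 T, Integrable (fun ω => (X t ω) ^ 2) P)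
    (hcond : ∀ t ∈ Icc 1 T, P[X t | ℱ t] =ᵐ[P] 0)
    (hbdd : ∀ t ∈ Icc 1 T, ∀ᵐ ω ∂P, X t ω ≤ B) (hα : B ≤ α)
    (n : ℕ) (hn : n ≤ T) :
    ∫ ω, Real.exp ((1/α) * ∑ t ∈ Icc 1 n, X t ω
      - (1/α)^2 * ∑ t ∈ Icc 1 n, (P[fun ω' => (X t ω') ^ 2 | ℱ t]) ω) ∂P ≤ 1 := by
  have hα0 : 0 < α := hB.trans_le hα
  have hc : 0 < 1/α := by positivity
  have hcB : (1/α) * B ≤ 1 := by rw [div_mul_eq_mul_div, one_mul, div_le_one hα0]; exact hα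
  induction n with
  | zero => simp
  | succ n ih =>
    have hn' : n ≤ T := Nat.le_of_succ_le hn
    have hmem : n + 1 ∈ Icc 1 T := mem_Icc.mpr ⟨Nat.succ_le_succ (Nat.zero_le n), hn⟩
    have hm : ℱ (n+1) ≤ m0 := ℱ.le _
    set g : Ω → ℝ := fun ω => Real.exp ((1/α) * ∑ t ∈ Icc 1 n, X t ω
      - (1/α)^2 * ∑ t ∈ Icc 1 (n+1), (P[fun ω' => (X t ω') ^ 2 | ℱ t]) ω) with hg_def
    set h : Ω → ℝ := fun ω => Real.exp ((1/α) * X (n+1) ω) with hh_def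
    have hgh : (fun ω => Real.exp ((1/α) * ∑ t ∈ Icc 1 (n+1), X t ω
        - (1/α)^2 * ∑ t ∈ Icc 1 (n+1), (P[fun ω' => (X t ω') ^ 2 | ℱ t]) ω)) = g * h := by
      funext ω
      simp only [Pi.mul_apply, hg_def, hh_def, ← Real.exp_add]
      rw [Finset.sum_Icc_succ_top (by omega : (1:ℕ) ≤ n+1) (fun t => X t ω)]
      ring_nf
    have hfint : Integrable (g * h) P := by
      rw [← hgh]; exact freedman_integrable P ℱ T X B α hB hmeas hbdd hα (n+1) hn
    have hgm : StronglyMeasurable[ℱ (n+1)] g := by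
      apply Real.continuous_exp.comp_stronglyMeasurable
      apply StronglyMeasurable.sub
      · apply StronglyMeasurable.const_mul
        apply Finset.stronglyMeasurable_fun_sum
        intro t ht
        have ht' : t ∈ Icc 1 T := mem_Icc.mpr ⟨(mem_Icc.mp ht).1, (mem_Icc.mp ht).2.trans hn'⟩
        exact (hmeas t ht').mono (ℱ.mono (by have := (mem_Icc.mp ht).2; omega))
      · apply StronglyMeasurable.const_mul
        apply Finset.stronglyMeasurable_fun_sum
        intro t ht
        exact stronglyMeasurable_condExp.mono (ℱ.mono (mem_Icc.mp ht).2)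
    have hhm : StronglyMeasurable[m0] h :=
      Real.continuous_exp.comp_stronglyMeasurable
        (((hmeas (n+1) hmem).mono (ℱ.le _)).const_mul _)
    have hhint : Integrable h P := by
      refine Integrable.mono' (integrable_const (Real.exp 1)) hhm.aestronglyMeasurable ?_
      filter_upwards [hbdd (n+1) hmem] with ω hω
      rw [hh_def]
      rw [Real.norm_eq_abs, abs_of_pos (Real.exp_pos _), Real.exp_le_exp]
      calc (1/α) * X (n+1) ω ≤ (1/α) * B := mul_le_mul_of_nonneg_left hω hc.le
      _ ≤ 1 := hcB
    -- conditional expectation bound for h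
    have hXsq_int : Integrable ((1/α)^2 • fun ω => (X (n+1) ω) ^ 2) P :=
      (hint2 (n+1) hmem).smul ((1/α)^2)
    have hX_int : Integrable ((1/α) • X (n+1)) P :=
      (hint (n+1) hmem).smul (1/α)
    have hrhs_int : Integrable ((fun _ : Ω => (1:ℝ)) + (1/α) • X (n+1)
        + (1/α)^2 • fun ω => (X (n+1) ω) ^ 2) P :=
      ((integrable_const 1).add hX_int).add hXsq_int
    have hha : h ≤ᵐ[P] (fun _ : Ω => (1:ℝ)) + (1/α) • X (n+1)
        + (1/α)^2 • fun ω => (X (n+1) ω) ^ 2 := by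
      filter_upwards [hbdd (n+1) hmem] with ω hω
      have hx1 : (1/α) * X (n+1) ω ≤ 1 :=
        le_trans (mul_le_mul_of_nonneg_left hω hc.le) hcB
      have := exp_le_one_add_add_sq hx1
      simp only [hh_def, Pi.add_apply, Pi.smul_apply, smul_eq_mul]
      calc Real.exp ((1/α) * X (n+1) ω) ≤ 1 + (1/α) * X (n+1) ω + ((1/α) * X (n+1) ω)^2 := this
      _ = 1 + (1/α) * X (n+1) ω + (1/α)^2 * (X (n+1) ω)^2 := by ring
    have hcond1 : P[h | ℱ (n+1)] ≤ᵐ[P]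
        P[(fun _ : Ω => (1:ℝ)) + (1/α) • X (n+1)
          + (1/α)^2 • fun ω => (X (n+1) ω) ^ 2 | ℱ (n+1)] :=
      condExp_mono hhint hrhs_int hha
    have hcond2 : P[(fun _ : Ω => (1:ℝ)) + (1/α) • X (n+1)
          + (1/α)^2 • fun ω => (X (n+1) ω) ^ 2 | ℱ (n+1)] =ᵐ[P]
        fun ω => 1 + (1/α)^2 * (P[fun ω' => (X (n+1) ω') ^ 2 | ℱ (n+1)]) ω := by
      have e1 := condExp_add (μ := P) (m := ℱ (n+1)) ((integrable_const (1:ℝ)).add hX_int) hXsq_int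
      have e2 := condExp_add (μ := P) (m := ℱ (n+1)) (integrable_const (1:ℝ)) hX_int
      have e3 := condExp_smul (μ := P) (m := ℱ (n+1)) (1/α) (X (n+1))
      have e4 := condExp_smul (μ := P) (m := ℱ (n+1)) ((1/α)^2) (fun ω => (X (n+1) ω) ^ 2)
      have e5 := hcond (n+1) hmem
      filter_upwards [e1, e2, e3, e4, e5] with ω h1 h2 h3 h4 h5
      rw [h1]
      simp only [Pi.add_apply, h2, h3, h4, condExp_const hm (1:ℝ), Pi.smul_apply, smul_eq_mul, h5]
      simp
    have key : P[g * h | ℱ (n+1)] ≤ᵐ[P] fun ω => Real.exp ((1/α) * ∑ t ∈ Icc 1 n, X t ω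
        - (1/α)^2 * ∑ t ∈ Icc 1 n, (P[fun ω' => (X t ω') ^ 2 | ℱ t]) ω) := by
      have h1 := condExp_mul_of_stronglyMeasurable_left hgm hfint hhint
      filter_upwards [h1, hcond1, hcond2] with ω e1 e2 e3
      rw [e1, Pi.mul_apply]
      have hg0 : 0 ≤ g ω := (Real.exp_pos _).le
      have e4 : (P[h | ℱ (n+1)]) ω ≤
          Real.exp ((1/α)^2 * (P[fun ω' => (X (n+1) ω') ^ 2 | ℱ (n+1)]) ω) := by
        refine le_trans (e2.trans_eq e3) ?_
        have := Real.add_one_le_exp ((1/α)^2 * (P[fun ω' => (X (n+1) ω') ^ 2 | ℱ (n+1)]) ω)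
        linarith
      calc g ω * (P[h | ℱ (n+1)]) ω
          ≤ g ω * Real.exp ((1/α)^2 * (P[fun ω' => (X (n+1) ω') ^ 2 | ℱ (n+1)]) ω) :=
            mul_le_mul_of_nonneg_left e4 hg0
      _ = Real.exp ((1/α) * ∑ t ∈ Icc 1 n, X t ω
            - (1/α)^2 * ∑ t ∈ Icc 1 n, (P[fun ω' => (X t ω') ^ 2 | ℱ t]) ω) := by
          rw [hg_def, ← Real.exp_add]
          congr 1
          rw [Finset.sum_Icc_succ_top (by omega : (1:ℕ) ≤ n+1)
            (fun t => (P[fun ω' => (X t ω') ^ 2 | ℱ t]) ω)]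
          ring
    calc ∫ ω, Real.exp ((1/α) * ∑ t ∈ Icc 1 (n+1), X t ω
          - (1/α)^2 * ∑ t ∈ Icc 1 (n+1), (P[fun ω' => (X t ω') ^ 2 | ℱ t]) ω) ∂P
        = ∫ ω, (g * h) ω ∂P := by rw [hgh]
    _ = ∫ ω, (P[g * h | ℱ (n+1)]) ω ∂P := (integral_condExp hm).symm
    _ ≤ ∫ ω, Real.exp ((1/α) * ∑ t ∈ Icc 1 n, X t ω
          - (1/α)^2 * ∑ t ∈ Icc 1 n, (P[fun ω' => (X t ω') ^ 2 | ℱ t]) ω) ∂P :=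
        integral_mono_ae integrable_condExp
          (freedman_integrable P ℱ T X B α hB hmeas hbdd hα n hn') key
    _ ≤ 1 := ih hn'

end Aux

/-- Freedman-type inequality: let `(Ω, 𝔉, P)` be a probability space with a filtration
`ℱ`, and `X_1, …, X_T` real random variables with `X_t` being `ℱ_{t+1}`-measurable,
`E[X_t | ℱ_t] = 0`, and `X_t ≤ B` almost surely, for a constant `B > 0`. Then for every
`α ≥ B` and `δ ∈ (0,1)`, with probability at least `1 − δ`,
`Σ_{t=1}^T X_t ≤ (1/α) Σ_{t=1}^T E[X_t² | ℱ_t] + α log(1/δ)`. -/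
theorem freedman_inequality
    {Ω : Type*} {m0 : MeasurableSpace Ω} (P : Measure Ω) [IsProbabilityMeasure P]
    (ℱ : Filtration ℕ m0) (T : ℕ) (X : ℕ → Ω → ℝ) (B : ℝ) (hB : 0 < B)
    (hmeas : ∀ t ∈ Icc 1 T, StronglyMeasurable[ℱ (t + 1)] (X t))
    (hint : ∀ t ∈ Icc 1 T, Integrable (X t) P)
    (hint2 : ∀ t ∈ Icc 1 T, Integrable (fun ω => (X t ω) ^ 2) P)
    (hcond : ∀ t ∈ Icc 1 T, P[X t | ℱ t] =ᵐ[P] 0)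
    (hbdd : ∀ t ∈ Icc 1 T, ∀ᵐ ω ∂P, X t ω ≤ B)
    (α : ℝ) (hα : B ≤ α) (δ : ℝ) (hδ0 : 0 < δ) (hδ1 : δ < 1) :
    (1 : ℝ) - δ ≤
      (P {ω | ∑ t ∈ Icc 1 T, X t ω ≤
          (1 / α) * ∑ t ∈ Icc 1 T, (P[fun ω' => (X t ω') ^ 2 | ℱ t]) ω
            + α * Real.log (1 / δ)}).toReal := by
  have hα0 : 0 < α := hB.trans_le hα
  set Z : Ω → ℝ := fun ω => Real.exp ((1/α) * ∑ t ∈ Icc 1 T, X t ω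
      - (1/α)^2 * ∑ t ∈ Icc 1 T, (P[fun ω' => (X t ω') ^ 2 | ℱ t]) ω) with hZ_def
  have hZint : Integrable Z P := freedman_integrable P ℱ T X B α hB hmeas hbdd hα T le_rfl
  have hZle : ∫ ω, Z ω ∂P ≤ 1 :=
    freedman_key P ℱ T X B α hB hmeas hint hint2 hcond hbdd hα T le_rfl
  have hmarkov := mul_meas_ge_le_integral_of_nonneg
    (ae_of_all P fun ω => (Real.exp_pos _).le) hZint (1/δ)
  -- the set where Z is large
  have hsub : {ω | ∑ t ∈ Icc 1 T, X t ω ≤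
        (1 / α) * ∑ t ∈ Icc 1 T, (P[fun ω' => (X t ω') ^ 2 | ℱ t]) ω
          + α * Real.log (1 / δ)}ᶜ ⊆ {ω | 1/δ ≤ Z ω} := by
    intro ω hω
    simp only [Set.mem_compl_iff, Set.mem_setOf_eq, not_le] at hω
    simp only [Set.mem_setOf_eq, hZ_def]
    have hlog : Real.log (1/δ) < (1/α) * ∑ t ∈ Icc 1 T, X t ω
        - (1/α)^2 * ∑ t ∈ Icc 1 T, (P[fun ω' => (X t ω') ^ 2 | ℱ t]) ω := by
      have h1 : (1/α) * (α * Real.log (1/δ)) = Real.log (1/δ) := by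
        field_simp
      nlinarith [mul_lt_mul_of_pos_left hω (by positivity : (0:ℝ) < 1/α)]
    have := Real.exp_lt_exp.mpr hlog
    rw [Real.exp_log (by positivity : (0:ℝ) < 1/δ)] at this
    exact this.le
  have hZmeas : StronglyMeasurable[m0] Z := freedman_sm P ℱ T X α hmeas T le_rfl
  have hEmeas : MeasurableSet {ω | ∑ t ∈ Icc 1 T, X t ω ≤
      (1 / α) * ∑ t ∈ Icc 1 T, (P[fun ω' => (X t ω') ^ 2 | ℱ t]) ω
        + α * Real.log (1 / δ)} := by
    have h1 : Measurable fun ω => ∑ t ∈ Icc 1 T, X t ω :=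
      Finset.measurable_sum _ fun t ht => ((hmeas t ht).mono (ℱ.le _)).measurable
    have h2 : Measurable fun ω => (1 / α) * ∑ t ∈ Icc 1 T, (P[fun ω' => (X t ω') ^ 2 | ℱ t]) ω
        + α * Real.log (1 / δ) := by
      apply Measurable.add_const
      apply Measurable.const_mul
      exact Finset.measurable_sum _ fun t _ =>
        (stronglyMeasurable_condExp.mono (ℱ.le _)).measurable
    exact measurableSet_le h1 h2
  -- from Markov: P(compl) ≤ δ
  have hcompl : (P {ω | ∑ t ∈ Icc 1 T, X t ω ≤
      (1 / α) * ∑ t ∈ Icc 1 T, (P[fun ω' => (X t ω') ^ 2 | ℱ t]) ω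
        + α * Real.log (1 / δ)}ᶜ).toReal ≤ δ := by
    have hmono : (P {ω | ∑ t ∈ Icc 1 T, X t ω ≤
        (1 / α) * ∑ t ∈ Icc 1 T, (P[fun ω' => (X t ω') ^ 2 | ℱ t]) ω
          + α * Real.log (1 / δ)}ᶜ).toReal ≤ (P {ω | 1/δ ≤ Z ω}).toReal :=
      ENNReal.toReal_mono (measure_ne_top P _) (measure_mono hsub)
    have h2 : (1/δ) * (P {ω | 1/δ ≤ Z ω}).toReal ≤ 1 := hmarkov.trans hZle
    have h3 : (P {ω | 1/δ ≤ Z ω}).toReal ≤ δ := by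
      have hd : (0:ℝ) < 1/δ := by positivity
      by_contra hp
      push_neg at hp
      have h4 : 1 / δ * δ < 1 / δ * (P {ω | 1/δ ≤ Z ω}).toReal :=
        mul_lt_mul_of_pos_left hp hd
      have h5 : 1 / δ * δ = 1 := by field_simp
      rw [h5] at h4
      linarith
    exact hmono.trans h3
  have hsum := prob_add_prob_compl (μ := P) hEmeas
  have hts : (P {ω | ∑ t ∈ Icc 1 T, X t ω ≤
      (1 / α) * ∑ t ∈ Icc 1 T, (P[fun ω' => (X t ω') ^ 2 | ℱ t]) ω
        + α * Real.log (1 / δ)}).toReal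
      + (P {ω | ∑ t ∈ Icc 1 T, X t ω ≤
      (1 / α) * ∑ t ∈ Icc 1 T, (P[fun ω' => (X t ω') ^ 2 | ℱ t]) ω
        + α * Real.log (1 / δ)}ᶜ).toReal = 1 := by
    rw [← ENNReal.toReal_add (measure_ne_top P _) (measure_ne_top P _), hsum]
    simp
  linarith
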